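/- (Forward regret of FTRL, finite-dimensional convex case) Let X ⊂ ℝ^d be closed and convex, let q_0, ..., q_T and p_1, ..., p_T be proper closed convex functions on ℝ^d with each p_t attaining its infimum over X at x_t (p_t(x_t) = inf_{x∈X} p_t(x) < +∞), set r_t = p_t + q_{t−1}, and let x_{t+1} ∈ argmin_{x∈X} ⟨g_{1:t}, x⟩ + p_{1:t}(x) + q_{0:t}(x) for t = 0,...,T (argmin assumed nonempty with finite value). Then for any x* ∈ X: ∑_{t=1}^T ⟨g_t, x_{t+1} − x*⟩ ≤ ∑_{t=0}^T (q_t(x*) − q_t(x_{t+1})) + ∑_{t=1}^T (p_t(x*) − p_t(x_t)) − ∑_{t=1}^T B_{r_{1:t}}(x_{t+1}, x_t). -/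

import Mathlib

open Filter Topology

noncomputable section

def dirDeriv {n : ℕ} (h : EuclideanSpace ℝ (Fin n) → EReal)
    (x z : EuclideanSpace ℝ (Fin n)) : EReal :=
  ⨅ α : Set.Ioi (0:ℝ), (h (x + (α : ℝ) • z) - h x) * (((α : ℝ))⁻¹ : ℝ)

def breg {n : ℕ} (h : EuclideanSpace ℝ (Fin n) → EReal)
    (y x : EuclideanSpace ℝ (Fin n)) : EReal :=
  if h y ≠ ⊤ ∧ h y ≠ ⊥ then h y - h x - dirDeriv h x (y - x) else ⊤

def ConvexE {n : ℕ} (f : EuclideanSpace ℝ (Fin n) → EReal) : Prop :=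
  ∀ a b, f a ≠ ⊤ → f b ≠ ⊤ → ∀ α : ℝ, α ∈ Set.Icc (0:ℝ) 1 →
    f (α • a + (1 - α) • b) ≤ ((α * (f a).toReal + (1 - α) * (f b).toReal : ℝ) : EReal)

section Helpers

lemma ereal_sum_ne_bot {ι : Type*} (s : Finset ι) (f : ι → EReal)
    (h : ∀ i ∈ s, f i ≠ ⊥) : ∑ i ∈ s, f i ≠ ⊥ := by
  classical
  induction s using Finset.induction with
  | empty => simp
  | @insert a s' hx ih =>
    rw [Finset.sum_insert hx, Ne, EReal.add_eq_bot_iff]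
    push_neg
    exact ⟨h a (Finset.mem_insert_self a s'), ih fun i hi => h i (Finset.mem_insert_of_mem hi)⟩

lemma ereal_coe_sum {ι : Type*} (s : Finset ι) (f : ι → ℝ) :
    ((∑ i ∈ s, f i : ℝ) : EReal) = ∑ i ∈ s, (f i : EReal) := by
  classical
  induction s using Finset.induction with
  | empty => simp
  | @insert a s' hx ih =>
    rw [Finset.sum_insert hx, Finset.sum_insert hx, EReal.coe_add, ih]

lemma ereal_add_ne_top_left {a b : EReal} (h : a + b ≠ ⊤) (hb : b ≠ ⊥) : a ≠ ⊤ := by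
  intro ha; exact h (by rw [ha]; exact EReal.top_add_of_ne_bot hb)

lemma ereal_add_ne_top_right {a b : EReal} (h : a + b ≠ ⊤) (ha : a ≠ ⊥) : b ≠ ⊤ := by
  intro hb; exact h (by rw [hb]; exact EReal.add_top_of_ne_bot ha)

lemma ereal_sum_mem_ne_top {ι : Type*} (s : Finset ι) (f : ι → EReal)
    (h : ∀ i ∈ s, f i ≠ ⊥) (hs : ∑ i ∈ s, f i ≠ ⊤) : ∀ i ∈ s, f i ≠ ⊤ := by
  classical
  intro i hi
  rw [← Finset.sum_erase_add s f hi] at hs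
  exact ereal_add_ne_top_right hs
    (ereal_sum_ne_bot _ _ fun j hj => h j (Finset.mem_of_mem_erase hj))

lemma ereal_sum_eq_top {ι : Type*} (s : Finset ι) (f : ι → EReal)
    (h : ∀ i ∈ s, f i ≠ ⊥) {i : ι} (hi : i ∈ s) (htop : f i = ⊤) : ∑ j ∈ s, f j = ⊤ := by
  classical
  rw [← Finset.sum_erase_add s f hi, htop]
  exact EReal.add_top_of_ne_bot
    (ereal_sum_ne_bot _ _ fun j hj => h j (Finset.mem_of_mem_erase hj))

lemma ereal_sum_toReal {ι : Type*} (s : Finset ι) (f : ι → EReal)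
    (hbot : ∀ i ∈ s, f i ≠ ⊥) (htop : ∀ i ∈ s, f i ≠ ⊤) :
    ∑ i ∈ s, f i = ((∑ i ∈ s, (f i).toReal : ℝ) : EReal) := by
  rw [ereal_coe_sum]
  exact Finset.sum_congr rfl fun i hi => (EReal.coe_toReal (htop i hi) (hbot i hi)).symm

lemma ereal_le_of_coe_add_le {r v : ℝ} {S : EReal} (h : (v : EReal) ≤ (r : EReal) + S) :
    ((v - r : ℝ) : EReal) ≤ S := by
  induction S using EReal.rec with
  | bot => simp at h
  | coe a =>
    rw [← EReal.coe_add, EReal.coe_le_coe_iff] at h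
    rw [EReal.coe_le_coe_iff]; linarith
  | top => exact le_top

lemma ereal_sub_coe_ne_bot {a : EReal} (ha : a ≠ ⊥) (r : ℝ) : a - (r : EReal) ≠ ⊥ := by
  rw [sub_eq_add_neg, Ne, EReal.add_eq_bot_iff]
  push_neg
  exact ⟨ha, by simp⟩

lemma dirDeriv_le_one {n : ℕ} (h : EuclideanSpace ℝ (Fin n) → EReal)
    (x z : EuclideanSpace ℝ (Fin n)) : dirDeriv h x z ≤ h (x + z) - h x := by
  have := iInf_le (fun α : Set.Ioi (0:ℝ) =>
      (h (x + (α : ℝ) • z) - h x) * (((α : ℝ))⁻¹ : ℝ)) ⟨1, by norm_num⟩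
  simpa [dirDeriv] using this

lemma dirDeriv_ge {n : ℕ} {h : EuclideanSpace ℝ (Fin n) → EReal}
    (hconv : ConvexE h) (hbot : ∀ u, h u ≠ ⊥)
    {x z : EuclideanSpace ℝ (Fin n)} (hx : h x ≠ ⊤) (c : ℝ)
    (H : ∀ α : ℝ, 0 < α → α ≤ 1 →
      (c : EReal) ≤ (h (x + α • z) - h x) * ((α⁻¹ : ℝ) : EReal)) :
    (c : EReal) ≤ dirDeriv h x z := by
  rw [dirDeriv]
  refine le_iInf ?_
  rintro ⟨α, hα⟩
  simp only [Set.mem_Ioi] at hα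
  show (c : EReal) ≤ (h (x + α • z) - h x) * ((α⁻¹ : ℝ) : EReal)
  rcases le_or_gt α 1 with h1 | h1
  · exact H α hα h1
  · by_cases htop : h (x + α • z) = ⊤
    · rw [htop]
      rw [sub_eq_add_neg, EReal.top_add_of_ne_bot (by simp [EReal.neg_eq_bot_iff, hx])]
      rw [EReal.top_mul_coe_of_pos (by positivity)]
      exact le_top
    · set c0 : ℝ := (h x).toReal with hc0
      have hxr : h x = (c0 : EReal) := (EReal.coe_toReal hx (hbot x)).symm
      set A : ℝ := (h (x + α • z)).toReal with hA
      have hAr : h (x + α • z) = (A : EReal) :=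
        (EReal.coe_toReal htop (hbot _)).symm
      have hlam : (α⁻¹ : ℝ) ∈ Set.Icc (0:ℝ) 1 := by
        constructor
        · positivity
        · rw [inv_le_one_iff₀]; right; linarith
      have hcv := hconv (x + α • z) x htop hx α⁻¹ hlam
      have hpt : α⁻¹ • (x + α • z) + (1 - α⁻¹) • x = x + z := by
        have : α⁻¹ * α = 1 := inv_mul_cancel₀ (ne_of_gt hα)
        rw [smul_add, smul_smul, this, one_smul]
        module
      rw [hpt, ← hc0, ← hA] at hcv
      have hxz_top : h (x + z) ≠ ⊤ := by
        intro hh; rw [hh] at hcv; exact (EReal.coe_lt_top _).not_ge hcv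
      set B : ℝ := (h (x + z)).toReal with hB
      have hBr : h (x + z) = (B : EReal) := (EReal.coe_toReal hxz_top (hbot _)).symm
      rw [hBr, EReal.coe_le_coe_iff] at hcv
      have h1' := H 1 one_pos le_rfl
      rw [one_smul, hBr, hxr, ← EReal.coe_sub] at h1'
      norm_num at h1'
      rw [← EReal.coe_sub, EReal.coe_le_coe_iff] at h1'
      rw [hAr, hxr, ← EReal.coe_sub, ← EReal.coe_mul, EReal.coe_le_coe_iff]
      have hα0 : (0:ℝ) < α⁻¹ := by positivity
      nlinarith [mul_le_mul_of_nonneg_right hcv (le_of_lt hα)]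

lemma convexE_add {n : ℕ} {f g : EuclideanSpace ℝ (Fin n) → EReal}
    (hf : ConvexE f) (hg : ConvexE g)
    (hfb : ∀ u, f u ≠ ⊥) (hgb : ∀ u, g u ≠ ⊥) :
    ConvexE (fun u => f u + g u) := by
  intro a b hta htb α hα
  simp only at hta htb ⊢
  have hfa : f a ≠ ⊤ := fun h => hta (by rw [h]; exact EReal.top_add_of_ne_bot (hgb a))
  have hga : g a ≠ ⊤ := fun h => hta (by rw [h]; exact EReal.add_top_of_ne_bot (hfb a))
  have hfb' : f b ≠ ⊤ := fun h => htb (by rw [h]; exact EReal.top_add_of_ne_bot (hgb b))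
  have hgb' : g b ≠ ⊤ := fun h => htb (by rw [h]; exact EReal.add_top_of_ne_bot (hfb b))
  have key : (f a + g a).toReal = (f a).toReal + (g a).toReal :=
    EReal.toReal_add hfa (hfb a) hga (hgb a)
  have key' : (f b + g b).toReal = (f b).toReal + (g b).toReal :=
    EReal.toReal_add hfb' (hfb b) hgb' (hgb b)
  rw [key, key']
  calc f (α • a + (1 - α) • b) + g (α • a + (1 - α) • b)
      ≤ ((α * (f a).toReal + (1 - α) * (f b).toReal : ℝ) : EReal)
        + ((α * (g a).toReal + (1 - α) * (g b).toReal : ℝ) : EReal) :=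
        add_le_add (hf a b hfa hfb' α hα) (hg a b hga hgb' α hα)
    _ = ((α * ((f a).toReal + (g a).toReal)
          + (1 - α) * ((f b).toReal + (g b).toReal) : ℝ) : EReal) := by
        rw [← EReal.coe_add]; ring_nf

lemma convexE_zero {n : ℕ} : ConvexE (fun _ : EuclideanSpace ℝ (Fin n) => (0 : EReal)) := by
  intro a b _ _ α hα
  simp only [EReal.toReal_zero, mul_zero, add_zero]
  norm_num

lemma convexE_sum {n : ℕ} {ι : Type*} (s : Finset ι)
    (f : ι → EuclideanSpace ℝ (Fin n) → EReal)
    (hc : ∀ i ∈ s, ConvexE (f i)) (hb : ∀ i ∈ s, ∀ u, f i u ≠ ⊥) :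
    ConvexE (fun u => ∑ i ∈ s, f i u) := by
  classical
  induction s using Finset.induction with
  | empty => simpa using convexE_zero
  | @insert a s' hx ih =>
    have h1 : ConvexE (fun u => f a u + ∑ i ∈ s', f i u) :=
      convexE_add (hc a (Finset.mem_insert_self a s'))
        (ih (fun i hi => hc i (Finset.mem_insert_of_mem hi))
            (fun i hi => hb i (Finset.mem_insert_of_mem hi)))
        (hb a (Finset.mem_insert_self a s'))
        (fun u => ereal_sum_ne_bot s' (fun i => f i u)
          (fun i hi => hb i (Finset.mem_insert_of_mem hi) u))
    simpa only [Finset.sum_insert hx] using h1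

end Helpers

/-- Forward (linear) regret bound for adaptive FTRL, finite-dimensional convex case:
`∑_{t=1}^T ⟨gₜ, x_{t+1} - x*⟩ ≤ ∑_{t=0}^T (qₜ(x*) - qₜ(x_{t+1})) + ∑_{t=1}^T (pₜ(x*) - pₜ(xₜ))
 - ∑_{t=1}^T B_{r_{1:t}}(x_{t+1}, xₜ)`, where `r_{1:t} = p_{1:t} + q_{0:t-1}` and
`x_{t+1} ∈ argmin_{x ∈ X} ⟨g_{1:t}, x⟩ + p_{1:t}(x) + q_{0:t}(x)`. -/
theorem stmt12 {n : ℕ} (T : ℕ) (X : Set (EuclideanSpace ℝ (Fin n)))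
    (hXclosed : IsClosed X) (hXconvex : Convex ℝ X)
    (q p : ℕ → EuclideanSpace ℝ (Fin n) → EReal)
    (g x : ℕ → EuclideanSpace ℝ (Fin n))
    (hq_proper : ∀ t ∈ Finset.Icc 0 T, (∃ u, q t u ≠ ⊤) ∧ ∀ u, q t u ≠ ⊥)
    (hp_proper : ∀ t ∈ Finset.Icc 1 T, (∃ u, p t u ≠ ⊤) ∧ ∀ u, p t u ≠ ⊥)
    (hq_closed : ∀ t ∈ Finset.Icc 0 T, LowerSemicontinuous (q t))
    (hp_closed : ∀ t ∈ Finset.Icc 1 T, LowerSemicontinuous (p t))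
    (hq_convex : ∀ t ∈ Finset.Icc 0 T, ConvexE (q t))
    (hp_convex : ∀ t ∈ Finset.Icc 1 T, ConvexE (p t))
    (hp_min : ∀ t ∈ Finset.Icc 1 T, p t (x t) ≠ ⊤ ∧ ∀ u ∈ X, p t (x t) ≤ p t u)
    (Φ : ℕ → EuclideanSpace ℝ (Fin n) → EReal)
    (hΦ : ∀ t u, Φ t u
      = ((inner ℝ (∑ s ∈ Finset.Icc 1 t, g s) u : ℝ) : EReal)
        + ∑ s ∈ Finset.Icc 1 t, p s u + ∑ s ∈ Finset.Icc 0 t, q s u)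
    (hargmin : ∀ t ∈ Finset.Icc 0 T, x (t + 1) ∈ X ∧ Φ t (x (t + 1)) ≠ ⊤ ∧
        Φ t (x (t + 1)) ≠ ⊥ ∧ ∀ u ∈ X, Φ t (x (t + 1)) ≤ Φ t u)
    (xstar : EuclideanSpace ℝ (Fin n)) (hstar : xstar ∈ X) :
    ((∑ t ∈ Finset.Icc 1 T, (inner ℝ (g t) (x (t + 1) - xstar) : ℝ) : ℝ) : EReal)
      ≤ ∑ t ∈ Finset.Icc 0 T, (q t xstar - q t (x (t + 1)))
        + ∑ t ∈ Finset.Icc 1 T, (p t xstar - p t (x t))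
        - ∑ t ∈ Finset.Icc 1 T,
            breg (fun u => ∑ s ∈ Finset.Icc 1 t, p s u + ∑ s ∈ Finset.Icc 0 (t - 1), q s u)
              (x (t + 1)) (x t) := by
  classical
  -- basic non-bottom facts
  have hqbot : ∀ t ∈ Finset.Icc 0 T, ∀ u, q t u ≠ ⊥ := fun t ht => (hq_proper t ht).2
  have hpbot : ∀ t ∈ Finset.Icc 1 T, ∀ u, p t u ≠ ⊥ := fun t ht => (hp_proper t ht).2
  -- membership transfer
  have memP : ∀ {t s : ℕ}, t ≤ T → s ∈ Finset.Icc 1 t → s ∈ Finset.Icc 1 T := by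
    intro t s ht hs; rw [Finset.mem_Icc] at *; omega
  have memQ : ∀ {t s : ℕ}, t ≤ T → s ∈ Finset.Icc 0 t → s ∈ Finset.Icc 0 T := by
    intro t s ht hs; rw [Finset.mem_Icc] at *; omega
  -- real-valued components
  set L : ℕ → EuclideanSpace ℝ (Fin n) → ℝ :=
    fun t u => (inner ℝ (∑ s ∈ Finset.Icc 1 t, g s) u : ℝ) with hL
  set Pr : ℕ → EuclideanSpace ℝ (Fin n) → ℝ :=
    fun t u => ∑ s ∈ Finset.Icc 1 t, (p s u).toReal with hPr
  set Qr : ℕ → EuclideanSpace ℝ (Fin n) → ℝ :=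
    fun t u => ∑ s ∈ Finset.Icc 0 t, (q s u).toReal with hQr
  -- value of Φ when all terms are finite
  have hPhiVal : ∀ t, t ≤ T → ∀ u, (∀ s ∈ Finset.Icc 1 t, p s u ≠ ⊤) →
      (∀ s ∈ Finset.Icc 0 t, q s u ≠ ⊤) →
      Φ t u = ((L t u + Pr t u + Qr t u : ℝ) : EReal) := by
    intro t ht u hp' hq'
    rw [hΦ t u,
      ereal_sum_toReal (Finset.Icc 1 t) (fun s => p s u)
        (fun s hs => hpbot s (memP ht hs) u) hp',
      ereal_sum_toReal (Finset.Icc 0 t) (fun s => q s u)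
        (fun s hs => hqbot s (memQ ht hs) u) hq',
      ← EReal.coe_add, ← EReal.coe_add]
  -- finiteness at the iterates
  have hfin : ∀ t, t ≤ T → (∀ s ∈ Finset.Icc 1 t, p s (x (t+1)) ≠ ⊤) ∧
      (∀ s ∈ Finset.Icc 0 t, q s (x (t+1)) ≠ ⊤) := by
    intro t ht
    have hne := (hargmin t (by rw [Finset.mem_Icc]; omega)).2.1
    rw [hΦ t (x (t+1))] at hne
    have hPb : (∑ s ∈ Finset.Icc 1 t, p s (x (t+1))) ≠ ⊥ :=
      ereal_sum_ne_bot _ _ fun s hs => hpbot s (memP ht hs) _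
    have hQb : (∑ s ∈ Finset.Icc 0 t, q s (x (t+1))) ≠ ⊥ :=
      ereal_sum_ne_bot _ _ fun s hs => hqbot s (memQ ht hs) _
    have hABne : ((L t (x (t+1)) : ℝ) : EReal) + ∑ s ∈ Finset.Icc 1 t, p s (x (t+1)) ≠ ⊤ :=
      ereal_add_ne_top_left hne hQb
    have hPne : (∑ s ∈ Finset.Icc 1 t, p s (x (t+1))) ≠ ⊤ :=
      ereal_add_ne_top_right hABne (by simp)
    have hQne : (∑ s ∈ Finset.Icc 0 t, q s (x (t+1))) ≠ ⊤ := by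
      refine ereal_add_ne_top_right hne ?_
      rw [Ne, EReal.add_eq_bot_iff]
      push_neg
      exact ⟨by simp, hPb⟩
    exact ⟨ereal_sum_mem_ne_top _ _ (fun s hs => hpbot s (memP ht hs) _) hPne,
      ereal_sum_mem_ne_top _ _ (fun s hs => hqbot s (memQ ht hs) _) hQne⟩
  set φ : ℕ → ℝ := fun t => (Φ t (x (t+1))).toReal with hφ
  have hφval : ∀ t, t ≤ T → Φ t (x (t+1)) = ((φ t : ℝ) : EReal) ∧
      φ t = L t (x (t+1)) + Pr t (x (t+1)) + Qr t (x (t+1)) := by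
    intro t ht
    have := hPhiVal t ht (x (t+1)) (hfin t ht).1 (hfin t ht).2
    constructor
    · show Φ t (x (t+1)) = (((Φ t (x (t+1))).toReal : ℝ) : EReal)
      rw [this, EReal.toReal_coe]
    · show (Φ t (x (t+1))).toReal = _
      rw [this, EReal.toReal_coe]
  -- core per-step estimate
  have hcore : ∀ t', t' + 1 ≤ T →
      ((inner ℝ (g (t'+1)) (x (t'+1+1)) : ℝ)
        = φ (t'+1) - (Φ t' (x (t'+1+1))).toReal - (p (t'+1) (x (t'+1+1))).toReal
          - (q (t'+1) (x (t'+1+1))).toReal)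
      ∧ (breg (fun u => ∑ s ∈ Finset.Icc 1 (t'+1), p s u + ∑ s ∈ Finset.Icc 0 t', q s u)
            (x (t'+1+1)) (x (t'+1))
          = (((breg (fun u => ∑ s ∈ Finset.Icc 1 (t'+1), p s u
              + ∑ s ∈ Finset.Icc 0 t', q s u) (x (t'+1+1)) (x (t'+1))).toReal : ℝ) : EReal))
      ∧ ((breg (fun u => ∑ s ∈ Finset.Icc 1 (t'+1), p s u + ∑ s ∈ Finset.Icc 0 t', q s u)
            (x (t'+1+1)) (x (t'+1))).toReal
          ≤ (Φ t' (x (t'+1+1))).toReal - φ t' + (p (t'+1) (x (t'+1+1))).toReal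
            - (p (t'+1) (x (t'+1))).toReal) := by
    intro t' hT1
    have ht' : t' ≤ T := by omega
    have memI : t' + 1 ∈ Finset.Icc 1 T := by rw [Finset.mem_Icc]; omega
    have mem0' : t' ∈ Finset.Icc 0 T := by rw [Finset.mem_Icc]; omega
    have mem1' : t' + 1 ∈ Finset.Icc 0 T := by rw [Finset.mem_Icc]; omega
    have harg0 := hargmin t' mem0'
    have harg1 := hargmin (t'+1) mem1'
    have hpmin := hp_min (t'+1) memI
    obtain ⟨pfin0, qfin0⟩ := hfin t' ht'
    obtain ⟨pfin1, qfin1⟩ := hfin (t'+1) hT1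
    have memup : ∀ {s}, s ∈ Finset.Icc 1 t' → s ∈ Finset.Icc 1 (t'+1) := by
      intro s hs; rw [Finset.mem_Icc] at *; omega
    have memuq : ∀ {s}, s ∈ Finset.Icc 0 t' → s ∈ Finset.Icc 0 (t'+1) := by
      intro s hs; rw [Finset.mem_Icc] at *; omega
    have hsplitP : ∀ u : EuclideanSpace ℝ (Fin n),
        ∑ s ∈ Finset.Icc 1 (t'+1), p s u = (∑ s ∈ Finset.Icc 1 t', p s u) + p (t'+1) u :=
      fun u => Finset.sum_Icc_succ_top (by omega) _
    have hsplitPr : ∀ u : EuclideanSpace ℝ (Fin n),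
        Pr (t'+1) u = Pr t' u + (p (t'+1) u).toReal := by
      intro u; simp only [hPr]; exact Finset.sum_Icc_succ_top (by omega) _
    have hsplitQr : ∀ u : EuclideanSpace ℝ (Fin n),
        Qr (t'+1) u = Qr t' u + (q (t'+1) u).toReal := by
      intro u; simp only [hQr]; exact Finset.sum_Icc_succ_top (by omega) _
    have hsplitL : ∀ u : EuclideanSpace ℝ (Fin n),
        L (t'+1) u = L t' u + (inner ℝ (g (t'+1)) u : ℝ) := by
      intro u; simp only [hL]
      rw [Finset.sum_Icc_succ_top (by omega : 1 ≤ t' + 1), inner_add_left]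
    set F : EuclideanSpace ℝ (Fin n) → EReal :=
      fun u => ∑ s ∈ Finset.Icc 1 (t'+1), p s u + ∑ s ∈ Finset.Icc 0 t', q s u with hF
    have hbotF : ∀ u, F u ≠ ⊥ := by
      intro u
      rw [hF]
      simp only [Ne, EReal.add_eq_bot_iff]
      push_neg
      exact ⟨ereal_sum_ne_bot _ _ fun s hs => hpbot s (memP hT1 hs) u,
        ereal_sum_ne_bot _ _ fun s hs => hqbot s (memQ ht' hs) u⟩
    have hpx : p (t'+1) (x (t'+1)) = (((p (t'+1) (x (t'+1))).toReal : ℝ) : EReal) :=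
      (EReal.coe_toReal hpmin.1 (hpbot _ memI _)).symm
    have hval1 : F (x (t'+1+1)) = ((Pr (t'+1) (x (t'+1+1)) + Qr t' (x (t'+1+1)) : ℝ) : EReal) := by
      rw [hF]
      simp only
      rw [ereal_sum_toReal _ _ (fun s hs => hpbot s (memP hT1 hs) _) pfin1,
        ereal_sum_toReal _ _ (fun s hs => hqbot s (memQ ht' hs) _)
          (fun s hs => qfin1 s (memuq hs)),
        ← EReal.coe_add]
    have hval0 : F (x (t'+1)) = ((Pr t' (x (t'+1)) + (p (t'+1) (x (t'+1))).toReal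
        + Qr t' (x (t'+1)) : ℝ) : EReal) := by
      rw [hF]
      simp only
      conv_lhs => rw [hsplitP, ereal_sum_toReal _ _ (fun s hs => hpbot s (memP ht' hs) _) pfin0,
        ereal_sum_toReal _ _ (fun s hs => hqbot s (memQ ht' hs) _) qfin0, hpx,
        ← EReal.coe_add, ← EReal.coe_add]
    have hΨ : Φ t' (x (t'+1+1)) = ((L t' (x (t'+1+1)) + Pr t' (x (t'+1+1))
        + Qr t' (x (t'+1+1)) : ℝ) : EReal) :=
      hPhiVal t' ht' _ (fun s hs => pfin1 s (memup hs)) (fun s hs => qfin1 s (memuq hs))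
    have hΨr : (Φ t' (x (t'+1+1))).toReal = L t' (x (t'+1+1)) + Pr t' (x (t'+1+1))
        + Qr t' (x (t'+1+1)) := by rw [hΨ, EReal.toReal_coe]
    have hq1r : (q (t'+1) (x (t'+1+1))).toReal = (q (t'+1) (x (t'+1+1))).toReal := rfl
    have hφ1 := (hφval (t'+1) hT1).2
    have hφ0 := (hφval t' ht').2
    refine ⟨?_, ?_⟩
    · -- the inner-product identity
      rw [hφ1, hsplitL, hsplitPr, hsplitQr, hΨr]
      ring
    · -- the Bregman part
      -- lower bound on the directional derivative
      have hDlow : ((-(inner ℝ (∑ s ∈ Finset.Icc 1 t', g s) (x (t'+1+1) - x (t'+1)) : ℝ) : ℝ) : EReal)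
          ≤ dirDeriv F (x (t'+1)) (x (t'+1+1) - x (t'+1)) := by
        refine dirDeriv_ge ?_ hbotF (by rw [hval0]; exact EReal.coe_ne_top _) _ ?_
        · rw [hF]
          exact convexE_add
            (convexE_sum _ _ (fun s hs => hp_convex s (memP hT1 hs))
              (fun s hs => hpbot s (memP hT1 hs)))
            (convexE_sum _ _ (fun s hs => hq_convex s (memQ ht' hs))
              (fun s hs => hqbot s (memQ ht' hs)))
            (fun u => ereal_sum_ne_bot _ _ fun s hs => hpbot s (memP hT1 hs) u)
            (fun u => ereal_sum_ne_bot _ _ fun s hs => hqbot s (memQ ht' hs) u)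
        · intro α hα0 hα1
          set z := x (t'+1+1) - x (t'+1) with hz
          set w := x (t'+1) + α • z with hw
          have hwX : w ∈ X := by
            have h1 : (1 - α) • (x (t'+1)) + α • (x (t'+1+1)) = w := by
              rw [hw, hz]; module
            rw [← h1]
            exact hXconvex harg0.1 harg1.1 (by linarith) (le_of_lt hα0) (by ring)
          by_cases htopw : F w = ⊤
          · rw [htopw, sub_eq_add_neg,
              EReal.top_add_of_ne_bot
                (by rw [hval0, Ne, EReal.neg_eq_bot_iff]; exact EReal.coe_ne_top _),
              EReal.top_mul_coe_of_pos (by positivity)]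
            exact le_top
          · have hFw : F w = ((F w).toReal : EReal) :=
              (EReal.coe_toReal htopw (hbotF w)).symm
            -- minimality of Φ t' at x (t'+1)
            have hmin := harg0.2.2.2 w hwX
            rw [(hφval t' ht').1, hΦ t' w, add_assoc] at hmin
            have hS := ereal_le_of_coe_add_le hmin
            have hp_ge : (((p (t'+1) (x (t'+1))).toReal : ℝ) : EReal) ≤ p (t'+1) w := by
              rw [← hpx]; exact hpmin.2 w hwX
            have hcomb : (((p (t'+1) (x (t'+1))).toReal + (φ t' - L t' w) : ℝ) : EReal)
                ≤ p (t'+1) w + (∑ s ∈ Finset.Icc 1 t', p s w + ∑ s ∈ Finset.Icc 0 t', q s w) := by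
              rw [EReal.coe_add]
              exact add_le_add hp_ge hS
            have hFw_eq : F w = p (t'+1) w
                + (∑ s ∈ Finset.Icc 1 t', p s w + ∑ s ∈ Finset.Icc 0 t', q s w) := by
              rw [hF]
              simp only
              rw [hsplitP w]
              abel
            rw [← hFw_eq] at hcomb
            rw [hFw] at hcomb
            rw [EReal.coe_le_coe_iff] at hcomb
            have hLw : L t' w = L t' (x (t'+1)) + α * (inner ℝ (∑ s ∈ Finset.Icc 1 t', g s) z : ℝ) := by
              rw [hw]; simp only [hL]
              rw [inner_add_right, real_inner_smul_right]
            rw [hFw, hval0, ← EReal.coe_sub, ← EReal.coe_mul, EReal.coe_le_coe_iff]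
            have hc' : (inner ℝ (∑ s ∈ Finset.Icc 1 t', g s) z : ℝ)
                = (inner ℝ (∑ s ∈ Finset.Icc 1 t', g s) (x (t'+1+1) - x (t'+1)) : ℝ) := by rw [hz]
            have hkey : (F w).toReal - (Pr t' (x (t'+1)) + (p (t'+1) (x (t'+1))).toReal
                + Qr t' (x (t'+1)))
                ≥ -(α * (inner ℝ (∑ s ∈ Finset.Icc 1 t', g s) z : ℝ)) := by
              rw [hLw] at hcomb
              rw [hφ0] at hcomb
              linarith
            rw [← hc']
            have hαinv : (0:ℝ) ≤ α⁻¹ := by positivity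
            have := mul_le_mul_of_nonneg_right hkey hαinv
            calc -(inner ℝ (∑ s ∈ Finset.Icc 1 t', g s) z : ℝ)
                = -(α * (inner ℝ (∑ s ∈ Finset.Icc 1 t', g s) z : ℝ)) * α⁻¹ := by
                  field_simp
              _ ≤ ((F w).toReal - (Pr t' (x (t'+1)) + (p (t'+1) (x (t'+1))).toReal
                  + Qr t' (x (t'+1)))) * α⁻¹ := this
      -- upper bound on the directional derivative
      have hDhigh : dirDeriv F (x (t'+1)) (x (t'+1+1) - x (t'+1))
          ≤ (((Pr (t'+1) (x (t'+1+1)) + Qr t' (x (t'+1+1)))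
              - (Pr t' (x (t'+1)) + (p (t'+1) (x (t'+1))).toReal + Qr t' (x (t'+1))) : ℝ) : EReal) := by
        have hthis := dirDeriv_le_one F (x (t'+1)) (x (t'+1+1) - x (t'+1))
        have hyz : x (t'+1) + (x (t'+1+1) - x (t'+1)) = x (t'+1+1) := by abel
        rw [hyz, hval1, hval0, ← EReal.coe_sub] at hthis
        exact hthis
      -- the derivative is a real number
      have hDtop : dirDeriv F (x (t'+1)) (x (t'+1+1) - x (t'+1)) ≠ ⊤ :=
        fun h => by rw [h] at hDhigh; exact (EReal.coe_lt_top _).not_ge hDhigh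
      have hDbot : dirDeriv F (x (t'+1)) (x (t'+1+1) - x (t'+1)) ≠ ⊥ :=
        fun h => by rw [h] at hDlow; simp at hDlow
      set d : ℝ := (dirDeriv F (x (t'+1)) (x (t'+1+1) - x (t'+1))).toReal with hd
      have hDeq : dirDeriv F (x (t'+1)) (x (t'+1+1) - x (t'+1)) = (d : EReal) :=
        (EReal.coe_toReal hDtop hDbot).symm
      have hdlow : -(inner ℝ (∑ s ∈ Finset.Icc 1 t', g s) (x (t'+1+1) - x (t'+1)) : ℝ) ≤ d := by
        rw [hDeq, EReal.coe_le_coe_iff] at hDlow; exact hDlow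
      have hbreg : breg F (x (t'+1+1)) (x (t'+1))
          = (((Pr (t'+1) (x (t'+1+1)) + Qr t' (x (t'+1+1)))
              - (Pr t' (x (t'+1)) + (p (t'+1) (x (t'+1))).toReal + Qr t' (x (t'+1))) - d : ℝ) : EReal) := by
        rw [breg, if_pos ⟨by rw [hval1]; exact EReal.coe_ne_top _, by rw [hval1]; exact EReal.coe_ne_bot _⟩,
          hval1, hval0, hDeq, ← EReal.coe_sub, ← EReal.coe_sub]
      have hbregr : (breg F (x (t'+1+1)) (x (t'+1))).toReal
          = (Pr (t'+1) (x (t'+1+1)) + Qr t' (x (t'+1+1)))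
            - (Pr t' (x (t'+1)) + (p (t'+1) (x (t'+1))).toReal + Qr t' (x (t'+1))) - d := by
        rw [hbreg, EReal.toReal_coe]
      constructor
      · rw [hbregr, hbreg]
      · rw [hbregr, hΨr, hφ0, hsplitPr]
        have hinner : (inner ℝ (∑ s ∈ Finset.Icc 1 t', g s) (x (t'+1+1) - x (t'+1)) : ℝ)
            = L t' (x (t'+1+1)) - L t' (x (t'+1)) := by
          simp only [hL]; rw [inner_sub_right]
        rw [hinner] at hdlow
        linarith
  -- value of φ at 0
  have hφzero : φ 0 = (q 0 (x 1)).toReal := by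
    have h0 := (hφval 0 (Nat.zero_le T)).2
    have e1 : Finset.Icc 1 0 = (∅ : Finset ℕ) := Finset.Icc_eq_empty (by omega)
    simp only [hL, hPr, hQr, e1, Finset.sum_empty, inner_zero_left, Finset.Icc_self,
      Finset.sum_singleton] at h0
    simpa using h0
  have hqyfin : ∀ t, t ≤ T → q t (x (t+1)) = (((q t (x (t+1))).toReal : ℝ) : EReal) := by
    intro t ht
    exact (EReal.coe_toReal ((hfin t ht).2 t (by rw [Finset.mem_Icc]; omega))
      (hqbot t (by rw [Finset.mem_Icc]; omega) _)).symm
  have hpxfin : ∀ t ∈ Finset.Icc 1 T, p t (x t) = (((p t (x t)).toReal : ℝ) : EReal) := by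
    intro t ht
    exact (EReal.coe_toReal (hp_min t ht).1 (hpbot t ht _)).symm
  set bR : ℕ → ℝ := fun t => (breg (fun u => ∑ s ∈ Finset.Icc 1 t, p s u
      + ∑ s ∈ Finset.Icc 0 (t-1), q s u) (x (t+1)) (x t)).toReal with hbR
  have hclaim : ∀ k, k ≤ T → ∑ t ∈ Finset.Icc 1 k, (inner ℝ (g t) (x (t+1)) : ℝ)
      ≤ φ k - φ 0 - ∑ t ∈ Finset.Icc 1 k,
          ((p t (x t)).toReal + bR t + (q t (x (t+1))).toReal) := by
    intro k
    induction k with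
    | zero => intro _; simp
    | succ k ih =>
      intro hk
      have hk' : k ≤ T := by omega
      have hsum1 : ∑ t ∈ Finset.Icc 1 (k+1), (inner ℝ (g t) (x (t+1)) : ℝ)
          = ∑ t ∈ Finset.Icc 1 k, (inner ℝ (g t) (x (t+1)) : ℝ)
            + (inner ℝ (g (k+1)) (x (k+1+1)) : ℝ) :=
        Finset.sum_Icc_succ_top (by omega) _
      have hsum2 : ∑ t ∈ Finset.Icc 1 (k+1),
            ((p t (x t)).toReal + bR t + (q t (x (t+1))).toReal)
          = ∑ t ∈ Finset.Icc 1 k, ((p t (x t)).toReal + bR t + (q t (x (t+1))).toReal)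
            + ((p (k+1) (x (k+1))).toReal + bR (k+1) + (q (k+1) (x (k+1+1))).toReal) :=
        Finset.sum_Icc_succ_top (by omega) _
      obtain ⟨hc1, hc2, hc3⟩ := hcore k hk
      have hbRk : bR (k+1) = (breg (fun u => ∑ s ∈ Finset.Icc 1 (k+1), p s u
          + ∑ s ∈ Finset.Icc 0 k, q s u) (x (k+1+1)) (x (k+1))).toReal := by
        rw [hbR]; simp only [Nat.add_sub_cancel]
      rw [hsum1, hsum2, hbRk]
      have hih := ih hk'
      linarith
  -- the Bregman sum is a real number
  have hbregsum : ∑ t ∈ Finset.Icc 1 T, breg (fun u => ∑ s ∈ Finset.Icc 1 t, p s u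
        + ∑ s ∈ Finset.Icc 0 (t-1), q s u) (x (t+1)) (x t)
      = ((∑ t ∈ Finset.Icc 1 T, bR t : ℝ) : EReal) := by
    rw [ereal_coe_sum]
    refine Finset.sum_congr rfl fun t ht => ?_
    rw [Finset.mem_Icc] at ht
    obtain ⟨t', rfl⟩ : ∃ t', t = t'+1 := ⟨t-1, by omega⟩
    have hcc := (hcore t' (by omega)).2.1
    rw [hbR]
    simp only [Nat.add_sub_cancel]
    exact hcc
  have hsplit0 : ∀ f : ℕ → ℝ, ∑ t ∈ Finset.Icc 0 T, f t = f 0 + ∑ t ∈ Finset.Icc 1 T, f t := by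
    intro f
    have heq : Finset.Icc 0 T = insert 0 (Finset.Icc 1 T) := by
      ext a; simp only [Finset.mem_Icc, Finset.mem_insert]; omega
    rw [heq, Finset.sum_insert (by simp [Finset.mem_Icc])]
  by_cases hcase : (∀ t ∈ Finset.Icc 1 T, p t xstar ≠ ⊤) ∧ (∀ t ∈ Finset.Icc 0 T, q t xstar ≠ ⊤)
  · obtain ⟨hpst, hqst⟩ := hcase
    have hqsum : ∑ t ∈ Finset.Icc 0 T, (q t xstar - q t (x (t+1)))
        = ((∑ t ∈ Finset.Icc 0 T, ((q t xstar).toReal - (q t (x (t+1))).toReal) : ℝ) : EReal) := by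
      rw [ereal_coe_sum]
      refine Finset.sum_congr rfl fun t ht => ?_
      rw [EReal.coe_sub, EReal.coe_toReal (hqst t ht) (hqbot t ht _),
        EReal.coe_toReal ((hfin t (Finset.mem_Icc.mp ht).2).2 t
          (by rw [Finset.mem_Icc]; omega)) (hqbot t ht _)]
    have hpsum : ∑ t ∈ Finset.Icc 1 T, (p t xstar - p t (x t))
        = ((∑ t ∈ Finset.Icc 1 T, ((p t xstar).toReal - (p t (x t)).toReal) : ℝ) : EReal) := by
      rw [ereal_coe_sum]
      refine Finset.sum_congr rfl fun t ht => ?_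
      rw [EReal.coe_sub, EReal.coe_toReal (hpst t ht) (hpbot t ht _),
        EReal.coe_toReal (hp_min t ht).1 (hpbot t ht _)]
    have hstar_val : Φ T xstar = ((L T xstar + Pr T xstar + Qr T xstar : ℝ) : EReal) :=
      hPhiVal T le_rfl xstar hpst hqst
    have hmin := (hargmin T (by rw [Finset.mem_Icc]; omega)).2.2.2 xstar hstar
    rw [(hφval T le_rfl).1, hstar_val, EReal.coe_le_coe_iff] at hmin
    rw [hqsum, hpsum, hbregsum, ← EReal.coe_add, ← EReal.coe_sub, EReal.coe_le_coe_iff]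
    have hclaimT := hclaim T le_rfl
    have hsplitinner : ∑ t ∈ Finset.Icc 1 T, (inner ℝ (g t) (x (t+1) - xstar) : ℝ)
        = ∑ t ∈ Finset.Icc 1 T, (inner ℝ (g t) (x (t+1)) : ℝ) - L T xstar := by
      simp only [hL]
      rw [sum_inner, ← Finset.sum_sub_distrib]
      exact Finset.sum_congr rfl fun t ht => by rw [inner_sub_right]
    have h1 : ∑ t ∈ Finset.Icc 0 T, ((q t xstar).toReal - (q t (x (t+1))).toReal)
        = ∑ t ∈ Finset.Icc 0 T, (q t xstar).toReal
          - ((q 0 (x 1)).toReal + ∑ t ∈ Finset.Icc 1 T, (q t (x (t+1))).toReal) := by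
      rw [Finset.sum_sub_distrib, hsplit0 (fun t => (q t (x (t+1))).toReal)]
    have h2 : ∑ t ∈ Finset.Icc 1 T, ((p t xstar).toReal - (p t (x t)).toReal)
        = ∑ t ∈ Finset.Icc 1 T, (p t xstar).toReal
          - ∑ t ∈ Finset.Icc 1 T, (p t (x t)).toReal := Finset.sum_sub_distrib _ _
    have h3 : ∑ t ∈ Finset.Icc 1 T, ((p t (x t)).toReal + bR t + (q t (x (t+1))).toReal)
        = ∑ t ∈ Finset.Icc 1 T, (p t (x t)).toReal + ∑ t ∈ Finset.Icc 1 T, bR t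
          + ∑ t ∈ Finset.Icc 1 T, (q t (x (t+1))).toReal := by
      rw [Finset.sum_add_distrib, Finset.sum_add_distrib]
    simp only [hPr, hQr] at hmin
    rw [hsplitinner, h1, h2]
    rw [h3] at hclaimT
    linarith
  · rw [not_and_or] at hcase
    push_neg at hcase
    have hS1bot : ∑ t ∈ Finset.Icc 0 T, (q t xstar - q t (x (t+1))) ≠ ⊥ :=
      ereal_sum_ne_bot _ _ fun t ht => by
        rw [hqyfin t (Finset.mem_Icc.mp ht).2]
        exact ereal_sub_coe_ne_bot (hqbot t ht _) _
    have hS2bot : ∑ t ∈ Finset.Icc 1 T, (p t xstar - p t (x t)) ≠ ⊥ :=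
      ereal_sum_ne_bot _ _ fun t ht => by
        rw [hpxfin t ht]
        exact ereal_sub_coe_ne_bot (hpbot t ht _) _
    have htop12 : ∑ t ∈ Finset.Icc 0 T, (q t xstar - q t (x (t+1)))
        + ∑ t ∈ Finset.Icc 1 T, (p t xstar - p t (x t)) = ⊤ := by
      rcases hcase with ⟨t, ht, htop⟩ | ⟨t, ht, htop⟩
      · have hterm : p t xstar - p t (x t) = ⊤ := by
          rw [hpxfin t ht, htop, sub_eq_add_neg,
            EReal.top_add_of_ne_bot (by simp)]
        have : ∑ t ∈ Finset.Icc 1 T, (p t xstar - p t (x t)) = ⊤ :=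
          ereal_sum_eq_top _ _ (fun s hs => by
            rw [hpxfin s hs]
            exact ereal_sub_coe_ne_bot (hpbot s hs _) _) ht hterm
        rw [this]
        exact EReal.add_top_of_ne_bot hS1bot
      · have hterm : q t xstar - q t (x (t+1)) = ⊤ := by
          rw [hqyfin t (Finset.mem_Icc.mp ht).2, htop, sub_eq_add_neg,
            EReal.top_add_of_ne_bot (by simp)]
        have : ∑ t ∈ Finset.Icc 0 T, (q t xstar - q t (x (t+1))) = ⊤ :=
          ereal_sum_eq_top _ _ (fun s hs => by
            rw [hqyfin s (Finset.mem_Icc.mp hs).2]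
            exact ereal_sub_coe_ne_bot (hqbot s hs _) _) ht hterm
        rw [this]
        exact EReal.top_add_of_ne_bot hS2bot
    rw [htop12, hbregsum, sub_eq_add_neg,
      EReal.top_add_of_ne_bot (by simp [Ne, EReal.neg_eq_bot_iff])]
    exact le_top



end
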